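/- Let n ≥ 2 be an even integer, 0 < p < 1, and let t ≥ 1 be an integer. Let f(g) denote the number of fixed points of a permutation g ∈ S_n. Then Σ_{g ∈ S_n} P^{*t}(g) · (f(g) − 1) = (n − 1) · (p − (1 − p)/(n − 1))^t. -/

import Mathlib

open Finset

/-- One step of the involution walk on `S_n`: an involution `σ` with `s` transpositions
(so `σ.support.card = 2*s`) has probability
`(n/2 choose s) * p^(n/2-s) * (1-p)^s * 2^s * s! * (n-2s)! / n!`;
non-involutions have probability `0`. -/
noncomputable def stepP (n : ℕ) (p : ℝ) (σ : Equiv.Perm (Fin n)) : ℝ :=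
  if σ * σ = 1 then
    ((n / 2).choose (σ.support.card / 2) : ℝ) * p ^ (n / 2 - σ.support.card / 2) *
      (1 - p) ^ (σ.support.card / 2) * (2 : ℝ) ^ (σ.support.card / 2) *
      (Nat.factorial (σ.support.card / 2) : ℝ) * (Nat.factorial (n - σ.support.card) : ℝ) /
      (Nat.factorial n : ℝ)
  else 0

/-- The `t`-step distribution of the involution walk:
`P^{*t}(g) = Σ_{g₁⋯g_t = g} P(g₁)⋯P(g_t)`, defined by convolution. -/
noncomputable def convPow (n : ℕ) (p : ℝ) : ℕ → Equiv.Perm (Fin n) → ℝ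
  | 0 => fun g => if g = 1 then 1 else 0
  | t + 1 => fun g => ∑ h : Equiv.Perm (Fin n), stepP n p h * convPow n p t (h⁻¹ * g)

/-- Total variation distance between `P^{*t}` and the uniform distribution:
`(1/2) Σ_g |P^{*t}(g) − 1/n!|`. -/
noncomputable def tvDist (n : ℕ) (p : ℝ) (t : ℕ) : ℝ :=
  (1 / 2) * ∑ g : Equiv.Perm (Fin n), |convPow n p t g - 1 / (Nat.factorial n : ℝ)|

set_option linter.unusedSectionVars false
set_option maxHeartbeats 1000000
section Aux
open Equiv Equiv.Perm

variable {α : Type*} [DecidableEq α] [Fintype α]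

lemma invol_apply_apply {σ : Perm α} (hσ : σ * σ = 1) (a : α) : σ (σ a) = a := by
  have := congrArg (fun τ : Perm α => τ a) hσ
  simpa using this

lemma invol_mul_swap_fix {σ : Perm α} (hσ : σ * σ = 1)
    {a b : α} (hab : a ≠ b) (hb : σ a = b) :
    (σ * swap a b) * (σ * swap a b) = 1 ∧ (σ * swap a b) a = a ∧ (σ * swap a b) b = b ∧
      (σ * swap a b).support = σ.support \ {a, b} := by
  have hba : σ b = a := by rw [← hb]; exact invol_apply_apply hσ a
  have hcomm : σ * swap a b = swap a b * σ := by
    have h1 : swap (σ a) (σ b) = σ * swap a b * σ⁻¹ := Equiv.swap_apply_apply σ a b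
    rw [hb, hba, Equiv.swap_comm] at h1
    calc σ * swap a b = (σ * swap a b * σ⁻¹) * σ := by group
    _ = swap a b * σ := by rw [← h1]
  have hinv : (σ * swap a b) * (σ * swap a b) = 1 := by
    calc (σ * swap a b) * (σ * swap a b) = σ * (swap a b * σ) * swap a b := by group
    _ = σ * (σ * swap a b) * swap a b := by rw [hcomm]
    _ = (σ * σ) * (swap a b * swap a b) := by group
    _ = 1 := by rw [hσ, swap_mul_self, mul_one]
  have hfa : (σ * swap a b) a = a := by
    simp [Equiv.Perm.mul_apply, Equiv.swap_apply_left, hba]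
  have hfb : (σ * swap a b) b = b := by
    simp [Equiv.Perm.mul_apply, Equiv.swap_apply_right, hb]
  refine ⟨hinv, hfa, hfb, ?_⟩
  have hdisj : Equiv.Perm.Disjoint (σ * swap a b) (swap a b) := by
    intro x
    by_cases hx : x = a
    · left; rw [hx]; exact hfa
    · by_cases hx' : x = b
      · left; rw [hx']; exact hfb
      · right; exact Equiv.swap_apply_of_ne_of_ne hx hx'
  have hsupp : σ.support = (σ * swap a b).support ∪ {a, b} := by
    have h2 : σ = (σ * swap a b) * swap a b := by rw [mul_assoc, swap_mul_self, mul_one]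
    conv_lhs => rw [h2]
    rw [hdisj.support_mul, Equiv.Perm.support_swap hab]
  rw [hsupp]
  have hnab : a ∉ (σ * swap a b).support := by simp [Equiv.Perm.mem_support, hfa]
  have hnbb : b ∉ (σ * swap a b).support := by simp [Equiv.Perm.mem_support, hfb]
  ext x
  simp only [Finset.mem_sdiff, Finset.mem_union, Finset.mem_insert, Finset.mem_singleton]
  constructor
  · intro hx
    refine ⟨Or.inl hx, ?_⟩
    rintro (rfl | rfl) <;> [exact hnab hx; exact hnbb hx]
  · rintro ⟨hx | hx, h2⟩
    · exact hx
    · exact absurd hx h2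

lemma invol_mul_swap_free {σ : Perm α} (hσ : σ * σ = 1)
    {a b : α} (hab : a ≠ b) (ha : σ a = a) (hb : σ b = b) :
    (σ * swap a b) * (σ * swap a b) = 1 ∧ (σ * swap a b) a = b ∧
      (σ * swap a b).support = σ.support ∪ {a, b} ∧
      a ∉ σ.support ∧ b ∉ σ.support := by
  have hdisj : Equiv.Perm.Disjoint σ (swap a b) := by
    intro x
    by_cases hx : x = a
    · left; rw [hx]; exact ha
    · by_cases hx' : x = b
      · left; rw [hx']; exact hb
      · right; exact Equiv.swap_apply_of_ne_of_ne hx hx'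
  have hcomm : Commute σ (swap a b) := hdisj.commute
  refine ⟨?_, ?_, ?_, by simp [Equiv.Perm.mem_support, ha], by simp [Equiv.Perm.mem_support, hb]⟩
  · calc (σ * swap a b) * (σ * swap a b) = σ * (swap a b * σ) * swap a b := by group
    _ = σ * (σ * swap a b) * swap a b := by rw [hcomm.eq]
    _ = (σ * σ) * (swap a b * swap a b) := by group
    _ = 1 := by rw [hσ, swap_mul_self, mul_one]
  · simp [Equiv.Perm.mul_apply, Equiv.swap_apply_left, hb]
  · rw [hdisj.support_mul, Equiv.Perm.support_swap hab]

lemma invol_support_even : ∀ (k : ℕ) (σ : Perm α), σ.support.card = k → σ * σ = 1 → Even k := by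
  intro k
  induction k using Nat.strong_induction_on with
  | _ k ih =>
    intro σ hk hσ
    rcases Nat.eq_zero_or_pos k with h0 | hpos
    · simp [h0]
    · have hne : σ.support.Nonempty := Finset.card_pos.mp (hk ▸ hpos)
      obtain ⟨a, ha⟩ := hne
      have hab : σ a ≠ a := Equiv.Perm.mem_support.mp ha
      set b := σ a with hbdef
      have hb : b ∈ σ.support := by
        rw [Equiv.Perm.mem_support, hbdef, invol_apply_apply hσ a]
        exact fun h => hab h.symm
      obtain ⟨hinv, _, _, hsupp⟩ := invol_mul_swap_fix hσ (Ne.symm hab) rfl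
      have hcard : (σ * swap a b).support.card = k - 2 := by
        rw [hsupp]
        rw [Finset.card_sdiff_of_subset (by intro x hx; simp at hx; rcases hx with rfl | rfl <;> assumption)]
        simp [hk, Finset.card_insert_of_notMem, Ne.symm hab]
      have hk2 : 2 ≤ k := by
        have : ({a, b} : Finset α) ⊆ σ.support := by
          intro x hx; simp at hx; rcases hx with rfl | rfl <;> assumption
        have := Finset.card_le_card this
        rwa [Finset.card_insert_of_notMem (by simpa using Ne.symm hab), Finset.card_singleton, hk] at this
      obtain ⟨c, hc⟩ := ih (k - 2) (by omega) _ hcard hinv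
      exact ⟨c + 1, by omega⟩



/-- The involutions in `S_n` with exactly `s` transpositions. -/
def T (n s : ℕ) : Finset (Perm (Fin n)) :=
  univ.filter (fun σ => σ * σ = 1 ∧ σ.support.card = 2 * s)

lemma card_T_zero (n : ℕ) : (T n 0).card = 1 := by
  have : T n 0 = {1} := by
    ext σ
    simp only [T, Finset.mem_filter, Finset.mem_univ, true_and, Finset.mem_singleton,
      Nat.mul_zero, Finset.card_eq_zero, Equiv.Perm.support_eq_empty_iff]
    constructor
    · rintro ⟨-, h⟩; exact h
    · rintro rfl; simp
  rw [this, Finset.card_singleton]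

lemma card_T_rec (n s : ℕ) :
    (T n (s+1)).card * (2 * (s+1)) = (T n s).card * ((n - 2*s) * (n - 2*s - 1)) := by
  classical
  set X : Finset (Perm (Fin n) × (Fin n × Fin n)) :=
    univ.filter (fun q => (q.1 * q.1 = 1 ∧ q.1.support.card = 2*(s+1)) ∧
      q.1 q.2.1 = q.2.2 ∧ q.2.1 ≠ q.2.2) with hX
  set Y : Finset (Perm (Fin n) × (Fin n × Fin n)) :=
    univ.filter (fun q => (q.1 * q.1 = 1 ∧ q.1.support.card = 2*s) ∧
      q.1 q.2.1 = q.2.1 ∧ q.1 q.2.2 = q.2.2 ∧ q.2.1 ≠ q.2.2) with hY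
  have hXcard : X.card = (T n (s+1)).card * (2*(s+1)) := by
    rw [Finset.card_eq_sum_card_fiberwise (f := Prod.fst) (t := T n (s+1))
      (fun q hq => by
        simp only [hX, Finset.mem_coe, Finset.mem_filter, Finset.mem_univ, true_and] at hq
        simp [T, hq.1.1, hq.1.2])]
    rw [Finset.sum_congr rfl (fun σ hσ => ?_), Finset.sum_const, smul_eq_mul]
    simp only [T, Finset.mem_filter, Finset.mem_univ, true_and] at hσ
    have himg : X.filter (fun q => q.1 = σ) = σ.support.image (fun a => (σ, (a, σ a))) := by
      ext q
      simp only [hX, Finset.mem_filter, Finset.mem_univ, true_and, Finset.mem_image,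
        Equiv.Perm.mem_support]
      constructor
      · rintro ⟨⟨-, h1, h2⟩, rfl⟩
        exact ⟨q.2.1, by rw [h1]; exact Ne.symm h2, by rw [h1]⟩
      · rintro ⟨a, ha, rfl⟩
        exact ⟨⟨hσ, rfl, Ne.symm ha⟩, rfl⟩
    rw [himg, Finset.card_image_of_injective _ (fun a b hab => by
      simpa using congrArg (fun q : Perm (Fin n) × (Fin n × Fin n) => q.2.1) hab), hσ.2]
  have hYcard : Y.card = (T n s).card * ((n - 2*s) * (n - 2*s - 1)) := by
    rw [Finset.card_eq_sum_card_fiberwise (f := Prod.fst) (t := T n s)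
      (fun q hq => by
        simp only [hY, Finset.mem_coe, Finset.mem_filter, Finset.mem_univ, true_and] at hq
        simp [T, hq.1.1, hq.1.2])]
    rw [Finset.sum_congr rfl (fun σ hσ => ?_), Finset.sum_const, smul_eq_mul]
    simp only [T, Finset.mem_filter, Finset.mem_univ, true_and] at hσ
    have himg : Y.filter (fun q => q.1 = σ) = (σ.supportᶜ).offDiag.image (fun ab => (σ, ab)) := by
      ext q
      simp only [hY, Finset.mem_filter, Finset.mem_univ, true_and, Finset.mem_image,
        Finset.mem_offDiag, Finset.mem_compl, Equiv.Perm.mem_support, not_not]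
      constructor
      · rintro ⟨⟨-, h1, h2, h3⟩, rfl⟩
        exact ⟨q.2, ⟨h1, h2, h3⟩, rfl⟩
      · rintro ⟨ab, ⟨h1, h2, h3⟩, rfl⟩
        exact ⟨⟨hσ, h1, h2, h3⟩, rfl⟩
    rw [himg, Finset.card_image_of_injective _ (fun a b hab => by
      simpa using congrArg (fun q : Perm (Fin n) × (Fin n × Fin n) => q.2) hab)]
    rw [Finset.offDiag_card, Finset.card_compl, Fintype.card_fin, hσ.2]
    rw [← Nat.pred_eq_sub_one, Nat.mul_pred]
  rw [← hXcard, ← hYcard]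
  refine Finset.card_bij' (fun q _ => (q.1 * swap q.2.1 q.2.2, q.2))
    (fun q _ => (q.1 * swap q.2.1 q.2.2, q.2)) ?_ ?_ ?_ ?_
  · intro q hq
    simp only [hX, Finset.mem_filter, Finset.mem_univ, true_and] at hq
    obtain ⟨⟨hinv, hcard⟩, h1, h2⟩ := hq
    obtain ⟨hinv', hfa, hfb, hsupp⟩ := invol_mul_swap_fix hinv h2 h1
    simp only [hY, Finset.mem_filter, Finset.mem_univ, true_and]
    refine ⟨⟨hinv', ?_⟩, hfa, hfb, h2⟩
    have hsub : ({q.2.1, q.2.2} : Finset (Fin n)) ⊆ q.1.support := by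
      intro x hx
      simp only [Finset.mem_insert, Finset.mem_singleton] at hx
      rcases hx with rfl | rfl
      · rw [Equiv.Perm.mem_support, h1]; exact Ne.symm h2
      · rw [Equiv.Perm.mem_support,
          show q.1 q.2.2 = q.2.1 from by rw [← h1, invol_apply_apply hinv]]
        exact h2
    rw [hsupp, Finset.card_sdiff_of_subset hsub, hcard,
      Finset.card_insert_of_notMem (by simpa using h2), Finset.card_singleton]
    omega
  · intro q hq
    simp only [hY, Finset.mem_filter, Finset.mem_univ, true_and] at hq
    obtain ⟨⟨hinv, hcard⟩, h1, h2, h3⟩ := hq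
    obtain ⟨hinv', hab, hsupp, hna, hnb⟩ := invol_mul_swap_free hinv h3 h1 h2
    simp only [hX, Finset.mem_filter, Finset.mem_univ, true_and]
    refine ⟨⟨hinv', ?_⟩, hab, h3⟩
    have hdis : _root_.Disjoint q.1.support ({q.2.1, q.2.2} : Finset (Fin n)) := by
      rw [Finset.disjoint_left]
      intro x hx hx'
      simp only [Finset.mem_insert, Finset.mem_singleton] at hx'
      rcases hx' with rfl | rfl
      · exact hna hx
      · exact hnb hx
    rw [hsupp, Finset.card_union_of_disjoint hdis, hcard,
      Finset.card_insert_of_notMem (by simpa using h3), Finset.card_singleton]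
    omega
  · intro q hq
    simp [mul_swap_mul_self]
  · intro q hq
    simp [mul_swap_mul_self]

lemma card_T_mul (n : ℕ) (cT : ℕ → ℕ)
    (hrec : ∀ s, cT (s+1) * (2 * (s+1)) = cT s * ((n - 2*s) * (n - 2*s - 1)))
    (h0 : cT 0 = 1) :
    ∀ s, 2 * s ≤ n → cT s * (2^s * s.factorial * (n - 2*s).factorial) = n.factorial := by
  intro s
  induction s with
  | zero => intro _; simp [h0]
  | succ s ih =>
    intro hs
    have hs' : 2 * s ≤ n := by omega
    set m := n - 2*(s+1) with hm
    have h1 : n - 2*s = m + 2 := by omega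
    have h2 : n - 2*s - 1 = m + 1 := by omega
    have key := hrec s
    rw [h2, h1] at key
    have expand : 2^(s+1) * (s+1).factorial * m.factorial
        = (2*(s+1)) * (2^s * s.factorial * m.factorial) := by
      rw [pow_succ, Nat.factorial_succ]; ring
    calc cT (s+1) * (2^(s+1) * (s+1).factorial * m.factorial)
        = (cT (s+1) * (2*(s+1))) * (2^s * s.factorial * m.factorial) := by
          rw [expand]; ring
      _ = (cT s * ((m+2)*(m+1))) * (2^s * s.factorial * m.factorial) := by rw [key]
      _ = cT s * (2^s * s.factorial * ((m+2) * ((m+1) * m.factorial))) := by ring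
      _ = cT s * (2^s * s.factorial * (m+2).factorial) := by
          rw [show (m+2).factorial = (m+2) * ((m+1) * m.factorial) from by
            rw [Nat.factorial_succ, Nat.factorial_succ]]
      _ = n.factorial := by rw [← h1]; exact ih hs'

lemma binom1 (m : ℕ) (p : ℝ) :
    ∑ s ∈ range (m+1), (m.choose s : ℝ) * p^(m-s) * (1-p)^s = 1 := by
  have h := add_pow (1-p) p m
  simp only [sub_add_cancel, one_pow] at h
  refine Eq.trans ?_ h.symm
  exact Finset.sum_congr rfl (fun s _ => by ring)

lemma binom2 (m : ℕ) (hm : 1 ≤ m) (p : ℝ) :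
    ∑ s ∈ range (m+1), (s:ℝ) * (m.choose s : ℝ) * p^(m-s) * (1-p)^s
      = (m:ℝ) * (1-p) := by
  rw [Finset.sum_range_succ']
  simp only [Nat.cast_zero, zero_mul, add_zero]
  have hstep : ∀ i : ℕ, ((i:ℝ)+1) * (m.choose (i+1) : ℝ) = (m:ℝ) * ((m-1).choose i : ℝ) := by
    intro i
    have h1 : (m * ((m-1).choose i) : ℕ) = (m.choose (i+1)) * (i+1) := by
      have := Nat.add_one_mul_choose_eq (m-1) i
      rwa [Nat.sub_add_cancel hm] at this
    have h2 := congrArg (fun x : ℕ => (x : ℝ)) h1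
    push_cast at h2
    linarith [h2]
  have hpt : ∀ i ∈ range m, ((i+1 : ℕ):ℝ) * (m.choose (i+1) : ℝ) * p^(m-(i+1)) * (1-p)^(i+1)
      = (m:ℝ)*(1-p) * (((m-1).choose i : ℝ) * p^((m-1)-i) * (1-p)^i) := by
    intro i _
    push_cast
    rw [show m-(i+1) = (m-1)-i from by omega, pow_succ]
    linear_combination (p^((m-1)-i) * ((1-p)^i * (1-p))) * hstep i
  rw [Finset.sum_congr rfl hpt, ← Finset.mul_sum]
  have hb := binom1 (m-1) p
  rw [show m-1+1 = m from by omega] at hb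
  rw [hb, mul_one]


lemma card_T_mul' (n s : ℕ) (h : 2*s ≤ n) :
    (T n s).card * (2^s * s.factorial * (n - 2*s).factorial) = n.factorial :=
  card_T_mul n (fun s => (T n s).card) (card_T_rec n) (card_T_zero n) s h

lemma stepP_conj (n : ℕ) (p : ℝ) (τ σ : Perm (Fin n)) :
    stepP n p (τ * σ * τ⁻¹) = stepP n p σ := by
  have hcard : (τ * σ * τ⁻¹).support.card = σ.support.card := Equiv.Perm.card_support_conj
  have hiff : ((τ * σ * τ⁻¹) * (τ * σ * τ⁻¹) = 1) ↔ (σ * σ = 1) := by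
    constructor
    · intro h
      have h1 : τ * (σ * σ) * τ⁻¹ = 1 := by rw [← h]; group
      have h2 := congrArg (fun x => τ⁻¹ * x * τ) h1
      simp only [mul_one] at h2
      calc σ * σ = τ⁻¹ * (τ * (σ * σ) * τ⁻¹) * τ := by group
        _ = τ⁻¹ * τ := h2
        _ = 1 := by group
    · intro h
      calc (τ * σ * τ⁻¹) * (τ * σ * τ⁻¹) = τ * (σ * σ) * τ⁻¹ := by group
        _ = 1 := by rw [h]; group
  unfold stepP
  rw [hcard]
  exact if_congr hiff rfl rfl

/-- One-step transition "matrix" entries. -/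
noncomputable def M1 (n : ℕ) (p : ℝ) (k j : Fin n) : ℝ :=
  ∑ σ : Perm (Fin n), stepP n p σ * (if σ k = j then 1 else 0)

lemma M1_conj (n : ℕ) (p : ℝ) (τ : Perm (Fin n)) (k j : Fin n) :
    M1 n p (τ k) (τ j) = M1 n p k j := by
  unfold M1
  refine Fintype.sum_equiv (MulAut.conj τ⁻¹).toEquiv _ _ (fun σ => ?_)
  have he : (MulAut.conj τ⁻¹).toEquiv σ = τ⁻¹ * σ * τ := by
    simp [MulAut.conj_apply]
  rw [he, show stepP n p (τ⁻¹ * σ * τ) = stepP n p σ from by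
    simpa using stepP_conj n p τ⁻¹ σ]
  congr 1
  refine if_congr ?_ rfl rfl
  rw [show (τ⁻¹ * σ * τ) k = τ⁻¹ (σ (τ k)) from rfl]
  constructor
  · intro h
    rw [h]; simp
  · intro h
    rw [← h]; simp

lemma exists_pair_perm {n : ℕ} {k j k' j' : Fin n} (h : k ≠ j) (h' : k' ≠ j') :
    ∃ τ : Perm (Fin n), τ k = k' ∧ τ j = j' := by
  refine ⟨swap (swap k k' j) j' * swap k k', ?_, ?_⟩
  · simp only [Equiv.Perm.mul_apply, Equiv.swap_apply_left]
    apply Equiv.swap_apply_of_ne_of_ne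
    · intro heq
      apply h
      have h3 := congrArg (swap k k') heq
      rw [Equiv.swap_apply_right, Equiv.swap_apply_self] at h3
      exact h3
    · exact h'
  · simp only [Equiv.Perm.mul_apply]
    exact Equiv.swap_apply_left _ _

lemma fix_sum {n : ℕ} (g : Perm (Fin n)) :
    ((n - g.support.card : ℕ) : ℝ) = ∑ i : Fin n, (if g i = i then (1:ℝ) else 0) := by
  have h1 : ∑ i : Fin n, (if g i = i then (1:ℝ) else 0)
      = ((univ.filter (fun i => g i = i)).card : ℝ) := by
    rw [Finset.sum_ite, Finset.sum_const, Finset.sum_const]; simp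
  rw [h1]
  congr 1
  have h2 : univ.filter (fun i => g i = i) = g.supportᶜ := by
    ext i; simp [Equiv.Perm.mem_support]
  rw [h2, Finset.card_compl, Fintype.card_fin]

lemma sum_step_char (n : ℕ) (hn : 2 ≤ n) (hne : Even n) (p : ℝ) :
    ∑ σ : Perm (Fin n), stepP n p σ * (((n - σ.support.card : ℕ) : ℝ) - 1)
      = (n:ℝ) * p - 1 := by
  obtain ⟨m, hm⟩ := hne
  have hm2 : n = 2 * m := by omega
  have hm1 : 1 ≤ m := by omega
  have hdiv : n / 2 = m := by omega
  rw [← Finset.sum_filter_of_ne (s := univ) (p := fun σ : Perm (Fin n) => σ * σ = 1)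
    (fun σ _ hne0 => by
      by_contra hσ
      exact hne0 (by simp [stepP, hσ]))]
  have hB : univ.filter (fun σ : Perm (Fin n) => σ * σ = 1)
      = (range (m+1)).biUnion (fun s => T n s) := by
    ext σ
    simp only [Finset.mem_filter, Finset.mem_univ, true_and, Finset.mem_biUnion,
      Finset.mem_range, T]
    constructor
    · intro hσ
      obtain ⟨c, hc⟩ := invol_support_even σ.support.card σ rfl hσ
      have hle : σ.support.card ≤ n := (Finset.card_le_univ _).trans (by simp)
      exact ⟨c, by omega, hσ, by omega⟩
    · rintro ⟨s, -, h⟩; exact h.1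
  have hdisj : (↑(range (m+1)) : Set ℕ).PairwiseDisjoint (T n) := by
    intro a _ b _ hab
    simp only [Function.onFun, Finset.disjoint_left]
    intro σ hσa hσb
    simp only [T, Finset.mem_filter] at hσa hσb
    exact hab (by omega)
  rw [hB, Finset.sum_biUnion hdisj]
  have hinner : ∀ s ∈ range (m+1),
      ∑ σ ∈ T n s, stepP n p σ * (((n - σ.support.card : ℕ) : ℝ) - 1)
        = (m.choose s : ℝ) * p^(m-s) * (1-p)^s * ((n:ℝ) - 2*s - 1) := by
    intro s hs
    rw [Finset.mem_range] at hs
    have h2s : 2*s ≤ n := by omega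
    have hTcast : ((T n s).card : ℝ) * ((2:ℝ)^s * (s.factorial:ℝ) * ((n-2*s).factorial:ℝ))
        = (n.factorial : ℝ) := by
      exact_mod_cast congrArg (Nat.cast : ℕ → ℝ) (card_T_mul' n s h2s)
    have hfac : (n.factorial : ℝ) ≠ 0 := Nat.cast_ne_zero.mpr (Nat.factorial_ne_zero n)
    have hval : ∀ σ ∈ T n s, stepP n p σ * (((n - σ.support.card : ℕ) : ℝ) - 1)
        = ((m.choose s : ℝ) * p^(m-s) * (1-p)^s * (2:ℝ)^s * (s.factorial:ℝ)
            * ((n-2*s).factorial : ℝ) / (n.factorial:ℝ)) * (((n:ℝ) - 2*s) - 1) := by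
      intro σ hσ
      simp only [T, Finset.mem_filter] at hσ
      obtain ⟨-, hinv, hcard⟩ := hσ
      simp only [stepP]
      rw [if_pos hinv, hcard, hdiv,
        Nat.mul_div_cancel_left s (by norm_num : 0 < 2), Nat.cast_sub h2s]
      push_cast
      ring
    rw [Finset.sum_congr rfl hval, Finset.sum_const, nsmul_eq_mul]
    field_simp
    linear_combination ((m.choose s : ℝ) * p^(m-s) * (1-p)^s * ((n:ℝ) - 2*(s:ℝ) - 1)) * hTcast
  rw [Finset.sum_congr rfl hinner]
  have hb1 := binom1 m p
  have hb2 := binom2 m hm1 p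
  have hsplit : ∀ s ∈ range (m+1),
      (m.choose s : ℝ) * p^(m-s) * (1-p)^s * ((n:ℝ) - 2*s - 1)
        = ((n:ℝ)-1) * ((m.choose s : ℝ) * p^(m-s) * (1-p)^s)
          - 2 * ((s:ℝ) * (m.choose s : ℝ) * p^(m-s) * (1-p)^s) := by
    intro s _; ring
  rw [Finset.sum_congr rfl hsplit, Finset.sum_sub_distrib, ← Finset.mul_sum, ← Finset.mul_sum,
    hb1, hb2]
  have hnm : (n:ℝ) = 2*(m:ℝ) := by exact_mod_cast congrArg (Nat.cast : ℕ → ℝ) hm2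
  linear_combination (1-p) * hnm

lemma char_decomp (n : ℕ) (p : ℝ) (g : Perm (Fin n)) :
    ∑ h : Perm (Fin n), stepP n p h * (((n - (h * g).support.card : ℕ) : ℝ) - 1)
      = (∑ i : Fin n, M1 n p (g i) i) - ∑ h : Perm (Fin n), stepP n p h := by
  have step1 : ∀ h : Perm (Fin n),
      stepP n p h * (((n - (h * g).support.card : ℕ) : ℝ) - 1)
        = (∑ i : Fin n, stepP n p h * (if h (g i) = i then (1:ℝ) else 0)) - stepP n p h := by
    intro h
    rw [show (((n - (h * g).support.card : ℕ) : ℝ)) = ∑ i : Fin n,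
      (if (h * g) i = i then (1:ℝ) else 0) from fix_sum (h * g), ← Finset.mul_sum]
    simp only [Equiv.Perm.mul_apply]
    exact mul_sub_one _ _
  rw [Finset.sum_congr rfl (fun h _ => step1 h), Finset.sum_sub_distrib]
  congr 1
  rw [Finset.sum_comm]
  rfl

lemma key_step (n : ℕ) (hn : 2 ≤ n) (hne : Even n) (p : ℝ) (g : Perm (Fin n)) :
    ∑ h : Perm (Fin n), stepP n p h * (((n - (h * g).support.card : ℕ) : ℝ) - 1)
      = (p - (1-p)/((n:ℝ)-1)) * (((n - g.support.card : ℕ) : ℝ) - 1) := by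
  have hne1 : ((n:ℝ) - 1) ≠ 0 := by
    have : (2:ℝ) ≤ (n:ℝ) := by exact_mod_cast hn
    linarith
  set i0 : Fin n := ⟨0, by omega⟩ with hi0
  set i1 : Fin n := ⟨1, by omega⟩ with hi1
  have hi01 : i0 ≠ i1 := by simp [hi0, hi1, Fin.ext_iff]
  set A := M1 n p i0 i0 with hA
  set B := M1 n p i0 i1 with hB
  have hdiag : ∀ k, M1 n p k k = A := by
    intro k
    rw [hA, ← M1_conj n p (swap i0 k) i0 i0, Equiv.swap_apply_left]
  have hoff : ∀ k j, k ≠ j → M1 n p k j = B := by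
    intro k j hkj
    obtain ⟨τ, h1, h2⟩ := exists_pair_perm hi01 hkj
    rw [hB, ← M1_conj n p τ i0 i1, h1, h2]
  have hS : ∑ h : Perm (Fin n), stepP n p h = A + ((n:ℝ)-1) * B := by
    have h1 : ∑ h : Perm (Fin n), stepP n p h = ∑ j, M1 n p i0 j := by
      unfold M1
      rw [Finset.sum_comm]
      refine Finset.sum_congr rfl (fun h _ => ?_)
      rw [← Finset.mul_sum]
      simp
    rw [h1, ← Finset.add_sum_erase _ _ (Finset.mem_univ i0), hdiag i0]
    congr 1
    rw [Finset.sum_congr rfl (fun j hj => hoff i0 j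
      (Ne.symm (Finset.mem_erase.mp hj).1)), Finset.sum_const, nsmul_eq_mul,
      Finset.card_erase_of_mem (Finset.mem_univ i0), Finset.card_univ, Fintype.card_fin,
      Nat.cast_sub (by omega : 1 ≤ n), Nat.cast_one]
  have hchar : (n:ℝ) * A - (A + ((n:ℝ)-1) * B) = (n:ℝ)*p - 1 := by
    have h1 := sum_step_char n hn hne p
    have h2 : ∑ σ : Perm (Fin n), stepP n p σ * (((n - σ.support.card : ℕ) : ℝ) - 1)
        = (∑ i : Fin n, M1 n p i i) - ∑ h : Perm (Fin n), stepP n p h := by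
      have h3 := char_decomp n p 1
      simp only [mul_one, Equiv.Perm.one_apply] at h3
      exact h3
    rw [h2, hS] at h1
    rw [Finset.sum_congr rfl (fun i _ => hdiag i), Finset.sum_const, nsmul_eq_mul,
      Finset.card_univ, Fintype.card_fin] at h1
    exact h1
  rw [char_decomp n p g, hS]
  have hsplit : ∑ i : Fin n, M1 n p (g i) i
      = ((n - g.support.card : ℕ) : ℝ) * A + (g.support.card : ℝ) * B := by
    rw [← Finset.sum_filter_add_sum_filter_not univ (fun i => g i = i)]
    have e1 : ∀ i ∈ univ.filter (fun i => g i = i), M1 n p (g i) i = A := by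
      intro i hi
      rw [(Finset.mem_filter.mp hi).2]
      exact hdiag i
    have e2 : ∀ i ∈ univ.filter (fun i => ¬ g i = i), M1 n p (g i) i = B := by
      intro i hi
      exact hoff (g i) i (Finset.mem_filter.mp hi).2
    rw [Finset.sum_congr rfl e1, Finset.sum_congr rfl e2, Finset.sum_const, Finset.sum_const,
      nsmul_eq_mul, nsmul_eq_mul]
    have hc1 : (univ.filter (fun i => g i = i)).card = n - g.support.card := by
      have h2 : univ.filter (fun i => g i = i) = g.supportᶜ := by
        ext i; simp [Equiv.Perm.mem_support]
      rw [h2, Finset.card_compl, Fintype.card_fin]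
    have hc2 : (univ.filter (fun i => ¬ g i = i)).card = g.support.card := by
      congr 1
    rw [hc1, hc2]
  rw [hsplit]
  have hcardle : g.support.card ≤ n := (Finset.card_le_univ _).trans (by simp)
  rw [Nat.cast_sub hcardle]
  set c := (g.support.card : ℝ) with hc
  have hABm : A = B + ((n:ℝ)*p - 1)/((n:ℝ)-1) := by
    field_simp
    linear_combination hchar
  rw [hABm]
  field_simp
  ring

end Aux

/-- The `t`-step expectation of the character `f(g) − 1` of the representation
`[n−1,1]` is `(n−1)(p − (1−p)/(n−1))^t`. -/
theorem stmt7 (n : ℕ) (hn : 2 ≤ n) (hne : Even n) (p : ℝ) (hp0 : 0 < p) (hp1 : p < 1)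
    (t : ℕ) (ht : 1 ≤ t) :
    ∑ g : Equiv.Perm (Fin n), convPow n p t g * (((n - g.support.card : ℕ) : ℝ) - 1)
      = ((n : ℝ) - 1) * (p - (1 - p) / ((n : ℝ) - 1)) ^ t := by
  clear ht hp0 hp1
  induction t with
  | zero =>
    simp only [convPow, ite_mul, one_mul, zero_mul, Finset.sum_ite_eq', Finset.mem_univ,
      if_true]
    simp
  | succ t ih =>
    calc ∑ g : Equiv.Perm (Fin n), convPow n p (t+1) g * (((n - g.support.card : ℕ) : ℝ) - 1)
        = ∑ g : Equiv.Perm (Fin n), ∑ h : Equiv.Perm (Fin n),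
            stepP n p h * convPow n p t (h⁻¹ * g) * (((n - g.support.card : ℕ) : ℝ) - 1) := by
          refine Finset.sum_congr rfl (fun g _ => ?_)
          simp only [convPow]
          rw [Finset.sum_mul]
      _ = ∑ h : Equiv.Perm (Fin n), ∑ g : Equiv.Perm (Fin n),
            stepP n p h * convPow n p t (h⁻¹ * g) * (((n - g.support.card : ℕ) : ℝ) - 1) :=
          Finset.sum_comm
      _ = ∑ h : Equiv.Perm (Fin n), ∑ g' : Equiv.Perm (Fin n),
            stepP n p h * convPow n p t g' * (((n - (h * g').support.card : ℕ) : ℝ) - 1) := by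
          refine Finset.sum_congr rfl (fun h _ => ?_)
          refine (Fintype.sum_equiv (Equiv.mulLeft h) _ _ (fun g' => ?_)).symm
          simp [inv_mul_cancel_left]
      _ = ∑ g' : Equiv.Perm (Fin n), convPow n p t g' *
            (∑ h : Equiv.Perm (Fin n),
              stepP n p h * (((n - (h * g').support.card : ℕ) : ℝ) - 1)) := by
          rw [Finset.sum_comm]
          refine Finset.sum_congr rfl (fun g' _ => ?_)
          rw [Finset.mul_sum]
          exact Finset.sum_congr rfl (fun h _ => by ring)
      _ = ∑ g' : Equiv.Perm (Fin n), convPow n p t g' *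
            ((p - (1-p)/((n:ℝ)-1)) * (((n - g'.support.card : ℕ) : ℝ) - 1)) :=
          Finset.sum_congr rfl (fun g' _ => by rw [key_step n hn hne p g'])
      _ = (p - (1-p)/((n:ℝ)-1)) * ∑ g' : Equiv.Perm (Fin n), convPow n p t g' *
            (((n - g'.support.card : ℕ) : ℝ) - 1) := by
          rw [Finset.mul_sum]
          exact Finset.sum_congr rfl (fun g' _ => by ring)
      _ = ((n : ℝ) - 1) * (p - (1 - p) / ((n : ℝ) - 1)) ^ (t+1) := by rw [ih]; ring
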